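/- Let p₁, p₂, q₁, q₂ be real numbers with 0 < p₁ ≤ p₂, 0 < q₁ ≤ q₂, p₁ + p₂ = q₁ + q₂ and p₂ ≤ q₂. Then for every real x with 0 < x, one has q₁·q₂·(x^{p₁} - 1)·(x^{p₂} - 1) ≤ p₁·p₂·(x^{q₁} - 1)·(x^{q₂} - 1). -/

import Mathlib

open Real Set

lemma my_convexOn_sinh : ConvexOn ℝ (Set.Ici 0) Real.sinh := by
  apply convexOn_of_deriv2_nonneg (convex_Ici 0)
  · exact Real.continuous_sinh.continuousOn
  · exact Real.differentiable_sinh.differentiableOn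
  · rw [Real.deriv_sinh]; exact Real.differentiable_cosh.differentiableOn
  · intro t ht
    rw [interior_Ici] at ht
    have h2 : deriv^[2] Real.sinh = Real.sinh := by
      simp [Function.iterate_succ, Real.deriv_sinh, Real.deriv_cosh]
    rw [h2, ← Real.sinh_zero]
    exact Real.sinh_le_sinh.2 ht.le

lemma sinh_div_mono {A B : ℝ} (hA : 0 ≤ A) (hAB : A ≤ B) :
    B * Real.sinh A ≤ A * Real.sinh B := by
  rcases eq_or_lt_of_le (hA.trans hAB) with h | hB
  · have hA0 : A = 0 := le_antisymm (by linarith) hA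
    simp [hA0, ← h, Real.sinh_zero]
  · have key : Real.sinh A ≤ (A / B) * Real.sinh B := by
      have h := my_convexOn_sinh.2 (Set.mem_Ici.2 (le_refl (0:ℝ)))
        (Set.mem_Ici.2 hB.le)
        (show (0:ℝ) ≤ 1 - A / B from sub_nonneg.2 (div_le_one_of_le₀ hAB hB.le))
        (show (0:ℝ) ≤ A / B by positivity)
        (show (1 - A / B) + A / B = 1 by ring)
      rw [smul_eq_mul, smul_eq_mul, smul_eq_mul, smul_eq_mul, mul_zero, zero_add,
        Real.sinh_zero, mul_zero, zero_add, show A / B * B = A by field_simp] at h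
      exact h
    calc B * Real.sinh A ≤ B * ((A / B) * Real.sinh B) :=
          mul_le_mul_of_nonneg_left key hB.le
        _ = A * Real.sinh B := by field_simp

lemma T2 {a d m : ℝ} (ha : 0 ≤ a) (hd : 0 ≤ d) (hdm : d ≤ m) :
    a*(m^2-d^2)*Real.sinh (a*d) ≤ 2*d*(Real.cosh (a*m) - Real.cosh (a*d)) := by
  set f : ℝ → ℝ := fun t => 2*d*Real.cosh (a*t) - a*(t^2-d^2)*Real.sinh (a*d) with hf
  have hmono : MonotoneOn f (Set.Icc d m) := by
    apply monotoneOn_of_hasDerivWithinAt_nonneg (convex_Icc d m)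
      (f' := fun t => 2*d*(a*Real.sinh (a*t)) - a*(2*t)*Real.sinh (a*d))
    · fun_prop
    · intro t ht
      apply HasDerivAt.hasDerivWithinAt
      have h0 : HasDerivAt (fun t : ℝ => a * t) a t := by
        simpa using (hasDerivAt_id t).const_mul a
      have h1 : HasDerivAt (fun t : ℝ => Real.cosh (a*t)) (Real.sinh (a*t) * a) t := h0.cosh
      have h2 : HasDerivAt (fun t : ℝ => a*(t^2-d^2)*Real.sinh (a*d))
          (a*(2*t)*Real.sinh (a*d)) t := by
        have : HasDerivAt (fun t : ℝ => t^2 - d^2) (2*t) t := by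
          simpa using ((hasDerivAt_pow 2 t).sub_const (d^2))
        exact (this.const_mul a).mul_const (Real.sinh (a*d))
      have := (h1.const_mul (2*d)).sub h2
      exact this.congr_deriv (by ring)
    · intro t ht
      rw [interior_Icc] at ht
      have key := sinh_div_mono (A := a*d) (B := a*t) (mul_nonneg ha hd)
        (mul_le_mul_of_nonneg_left (le_of_lt ht.1) ha)
      nlinarith [key]
  have := hmono (Set.left_mem_Icc.2 hdm) (Set.mem_Icc.2 ⟨hdm, le_refl m⟩) hdm
  simp only [hf] at this
  nlinarith [this]

lemma T1 {a e d : ℝ} (ha : 0 ≤ a) (he : 0 ≤ e) (hed : e ≤ d) :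
    2*d*(Real.cosh (a*d) - Real.cosh (a*e)) ≤ a*(d^2-e^2)*Real.sinh (a*d) := by
  set g : ℝ → ℝ := fun t => 2*d*Real.cosh (a*t) + a*(d^2-t^2)*Real.sinh (a*d) with hg
  have hanti : AntitoneOn g (Set.Icc 0 d) := by
    apply antitoneOn_of_hasDerivWithinAt_nonpos (convex_Icc 0 d)
      (f' := fun t => 2*d*(a*Real.sinh (a*t)) - a*(2*t)*Real.sinh (a*d))
    · fun_prop
    · intro t ht
      apply HasDerivAt.hasDerivWithinAt
      have h0 : HasDerivAt (fun t : ℝ => a * t) a t := by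
        simpa using (hasDerivAt_id t).const_mul a
      have h1 : HasDerivAt (fun t : ℝ => Real.cosh (a*t)) (Real.sinh (a*t) * a) t := h0.cosh
      have h2 : HasDerivAt (fun t : ℝ => a*(d^2-t^2)*Real.sinh (a*d))
          (-(a*(2*t))*Real.sinh (a*d)) t := by
        have : HasDerivAt (fun t : ℝ => d^2 - t^2) (-(2*t)) t := by
          simpa using ((hasDerivAt_pow 2 t).const_sub (d^2))
        have h3 := (this.const_mul a).mul_const (Real.sinh (a*d))
        exact h3.congr_deriv (by ring)
      have := (h1.const_mul (2*d)).add h2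
      exact this.congr_deriv (by ring)
    · intro t ht
      rw [interior_Icc] at ht
      have key := sinh_div_mono (A := a*t) (B := a*d) (mul_nonneg ha ht.1.le)
        (mul_le_mul_of_nonneg_left (le_of_lt ht.2) ha)
      nlinarith [key]
  have := hanti (Set.mem_Icc.2 ⟨he, hed⟩) (Set.right_mem_Icc.2 (he.trans hed)) hed
  simp only [hg] at this
  nlinarith [this]

lemma star_ineq {a e d m : ℝ} (ha : 0 ≤ a) (he : 0 ≤ e) (hed : e ≤ d) (hdm : d ≤ m) :
    (m^2-e^2)*Real.cosh (a*d) ≤ (d^2-e^2)*Real.cosh (a*m) + (m^2-d^2)*Real.cosh (a*e) := by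
  rcases eq_or_lt_of_le (he.trans hed) with h | hd
  · have he0 : e = 0 := le_antisymm (by linarith [hed]) he
    rw [← h, he0]
    ring_nf
    rfl
  · have t1 := T1 ha he hed
    have t2 := T2 ha (he.trans hed) hdm
    have h1 : (m^2-d^2) * (2*d*(Real.cosh (a*d) - Real.cosh (a*e)))
        ≤ (m^2-d^2) * (a*(d^2-e^2)*Real.sinh (a*d)) :=
      mul_le_mul_of_nonneg_left t1 (by nlinarith)
    have h2 : (d^2-e^2) * (a*(m^2-d^2)*Real.sinh (a*d))
        ≤ (d^2-e^2) * (2*d*(Real.cosh (a*m) - Real.cosh (a*d))) :=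
      mul_le_mul_of_nonneg_left t2 (by nlinarith)
    have key : (m^2-d^2) * (2*d*(Real.cosh (a*d) - Real.cosh (a*e)))
        ≤ (d^2-e^2) * (2*d*(Real.cosh (a*m) - Real.cosh (a*d))) := by
      nlinarith [h1, h2]
    nlinarith [key, hd]

lemma my_prod_eq (a m e : ℝ) :
    (Real.exp (a*(m-e)) - 1) * (Real.exp (a*(m+e)) - 1)
      = 2*Real.exp (a*m)*(Real.cosh (a*m) - Real.cosh (a*e)) := by
  rw [Real.cosh_eq, Real.cosh_eq, show a*(m-e) = a*m - a*e by ring,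
    show a*(m+e) = a*m + a*e by ring, Real.exp_sub, Real.exp_add,
    Real.exp_neg, Real.exp_neg]
  have h1 : Real.exp (a*m) > 0 := Real.exp_pos _
  have h2 : Real.exp (a*e) > 0 := Real.exp_pos _
  field_simp
  ring

theorem stmt_2 (p₁ p₂ q₁ q₂ : ℝ) (hp₁ : 0 < p₁) (hp : p₁ ≤ p₂) (hq₁ : 0 < q₁)
    (hq : q₁ ≤ q₂) (hsum : p₁ + p₂ = q₁ + q₂) (hpq : p₂ ≤ q₂) (x : ℝ) (hx : 0 < x) :
    q₁ * q₂ * (x ^ p₁ - 1) * (x ^ p₂ - 1) ≤ p₁ * p₂ * (x ^ q₁ - 1) * (x ^ q₂ - 1) := by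
  have hxp : ∀ t : ℝ, x ^ t = Real.exp (Real.log x * t) := fun t =>
    Real.rpow_def_of_pos hx t
  set a := Real.log x with ha
  set m : ℝ := (q₁+q₂)/2 with hm
  set d : ℝ := (q₂-q₁)/2 with hd
  set e : ℝ := (p₂-p₁)/2 with he
  have hp₁' : p₁ = m - e := by rw [hm, he]; linarith
  have hp₂' : p₂ = m + e := by rw [hm, he]; linarith
  have hq₁' : q₁ = m - d := by rw [hm, hd]; ring
  have hq₂' : q₂ = m + d := by rw [hm, hd]; ring
  have he0 : 0 ≤ e := by rw [he]; linarith
  have hed : e ≤ d := by rw [he, hd]; linarith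
  have hdm : d ≤ m := by rw [hm, hd]; linarith
  have hqq : q₁ * q₂ = m^2 - d^2 := by rw [hq₁', hq₂']; ring
  have hpp : p₁ * p₂ = m^2 - e^2 := by rw [hp₁', hp₂']; ring
  have habs : ∀ t : ℝ, 0 ≤ t → Real.cosh (a*t) = Real.cosh (|a| * t) := fun t ht => by
    rw [show |a| * t = |a*t| by rw [abs_mul, abs_of_nonneg ht], Real.cosh_abs]
  have hstar := star_ineq (a := |a|) (abs_nonneg a) he0 hed hdm
  rw [← habs e he0, ← habs d (he0.trans hed), ← habs m ((he0.trans hed).trans hdm)] at hstar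
  have lhs_eq : q₁ * q₂ * (x ^ p₁ - 1) * (x ^ p₂ - 1)
      = (m^2-d^2) * (2*Real.exp (a*m)*(Real.cosh (a*m) - Real.cosh (a*e))) := by
    calc q₁ * q₂ * (x ^ p₁ - 1) * (x ^ p₂ - 1)
        = (q₁*q₂) * ((Real.exp (a*(m-e)) - 1) * (Real.exp (a*(m+e)) - 1)) := by
          rw [hxp p₁, hxp p₂, hp₁', hp₂']; ring
      _ = (m^2-d^2) * (2*Real.exp (a*m)*(Real.cosh (a*m) - Real.cosh (a*e))) := by
          rw [my_prod_eq, hqq]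
  have rhs_eq : p₁ * p₂ * (x ^ q₁ - 1) * (x ^ q₂ - 1)
      = (m^2-e^2) * (2*Real.exp (a*m)*(Real.cosh (a*m) - Real.cosh (a*d))) := by
    calc p₁ * p₂ * (x ^ q₁ - 1) * (x ^ q₂ - 1)
        = (p₁*p₂) * ((Real.exp (a*(m-d)) - 1) * (Real.exp (a*(m+d)) - 1)) := by
          rw [hxp q₁, hxp q₂, hq₁', hq₂']; ring
      _ = (m^2-e^2) * (2*Real.exp (a*m)*(Real.cosh (a*m) - Real.cosh (a*d))) := by
          rw [my_prod_eq, hpp]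
  rw [lhs_eq, rhs_eq]
  have gap : 0 ≤ (d^2-e^2)*Real.cosh (a*m) + (m^2-d^2)*Real.cosh (a*e)
      - (m^2-e^2)*Real.cosh (a*d) := by linarith
  nlinarith [mul_nonneg (Real.exp_pos (a*m)).le gap]
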